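/- Let 0<p0,p1<1, k≥2, M≥1, and set p̂ = p0 + p1 − p0·p1 and p̃ = (1 − p1^(k−1))·p̂. Suppose Y1 ~ Binomial(M, 1−p̂), and conditionally on Y1 = i, Z − Y1 counts additional successes with P(Z = j | Y1 = i) = C(M−i, j−i)·(1−p1^(k−1))^(j−i)·p1^((k−1)(M−j)) for i ≤ j ≤ M. Then Δ = Z − Y1 follows the Binomial(M, p̃) distribution, i.e., P(Δ = δ) = C(M, δ)·p̃^δ·(1−p̃)^(M−δ) for all 0 ≤ δ ≤ M. -/

import Mathlib

/-- Vandermonde-type binomial identity: C(M,i)·C(M-i,δ) = C(M,δ)·C(M-δ,i). -/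
lemma choose_swap (M i δ : ℕ) (h : i + δ ≤ M) :
    M.choose i * (M - i).choose δ = M.choose δ * (M - δ).choose i := by
  have h1 := Nat.choose_mul (n := M) (k := i + δ) (s := i) (Nat.le_add_right _ _)
  have h2 := Nat.choose_mul (n := M) (k := i + δ) (s := δ) (Nat.le_add_left _ _)
  simp only [Nat.add_sub_cancel, Nat.add_sub_cancel_left] at h1 h2
  have hs : (i + δ).choose i = (i + δ).choose δ := Nat.choose_symm_add
  rw [← h1, ← h2, hs]

/-- Lemma 1 of the paper: the deficit Δ = Z − Y1 is Binomial(M, ptilde) with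
ptilde = (1 − p1^(k−1))·(p0 + p1 − p0·p1).  The left-hand side is the unconditional
probability P(Δ = δ) = ∑_i P(Y1 = i)·P(Z = i + δ | Y1 = i). -/
theorem lemma1_delta_binomial (p0 p1 : ℝ) (k M δ : ℕ)
    (hp0 : 0 < p0) (hp0' : p0 < 1) (hp1 : 0 < p1) (hp1' : p1 < 1)
    (hk : 2 ≤ k) (hM : 1 ≤ M) (hδ : δ ≤ M) :
    ∑ i ∈ Finset.range (M - δ + 1),
      ((M.choose i : ℝ) * ((1 - p0) * (1 - p1)) ^ i * (p0 + p1 - p0 * p1) ^ (M - i)) *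
        (((M - i).choose δ : ℝ) * (1 - p1 ^ (k - 1)) ^ δ * p1 ^ ((k - 1) * (M - i - δ)))
    = (M.choose δ : ℝ) * ((1 - p1 ^ (k - 1)) * (p0 + p1 - p0 * p1)) ^ δ *
        (1 - (1 - p1 ^ (k - 1)) * (p0 + p1 - p0 * p1)) ^ (M - δ) := by
  set r : ℝ := p1 ^ (k - 1) with hr
  set q : ℝ := (1 - p0) * (1 - p1) with hq
  set ph : ℝ := p0 + p1 - p0 * p1 with hph
  have hkey : 1 - (1 - r) * ph = q + ph * r := by rw [hr, hq, hph]; ring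
  clear_value r q ph
  rw [hkey, add_pow]
  rw [Finset.mul_sum]
  apply Finset.sum_congr rfl
  intro i hi
  have hi' : i ≤ M - δ := Nat.lt_succ_iff.mp (Finset.mem_range.mp hi)
  have hiM : i + δ ≤ M := by omega
  -- exponent rewrites
  have e1 : ph ^ (M - i) = ph ^ δ * ph ^ (M - δ - i) := by
    rw [← pow_add]; congr 1; omega
  have e2 : p1 ^ ((k - 1) * (M - i - δ)) = r ^ (M - δ - i) := by
    have h3 : M - i - δ = M - δ - i := by omega
    rw [h3, hr, ← pow_mul]
  have echoose : (M.choose i : ℝ) * ((M - i).choose δ : ℝ)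
      = (M.choose δ : ℝ) * ((M - δ).choose i : ℝ) := by
    exact_mod_cast congrArg (Nat.cast : ℕ → ℝ) (choose_swap M i δ hiM)
  rw [e1, e2]
  calc (M.choose i : ℝ) * q ^ i * (ph ^ δ * ph ^ (M - δ - i)) *
        (((M - i).choose δ : ℝ) * (1 - r) ^ δ * (r) ^ (M - δ - i))
      = ((M.choose i : ℝ) * ((M - i).choose δ : ℝ)) *
          (q ^ i * (ph ^ δ * ph ^ (M - δ - i)) * ((1 - r) ^ δ * r ^ (M - δ - i))) := by ring
    _ = ((M.choose δ : ℝ) * ((M - δ).choose i : ℝ)) *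
          (q ^ i * (ph ^ δ * ph ^ (M - δ - i)) * ((1 - r) ^ δ * r ^ (M - δ - i))) := by
        rw [echoose]
    _ = (M.choose δ : ℝ) * ((1 - r) * ph) ^ δ *
          (q ^ i * (ph * r) ^ (M - δ - i) * ((M - δ).choose i : ℝ)) := by
        rw [mul_pow, mul_pow]; ring
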